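/- Let κ be an infinite cardinal and let T be any tree of order κ. Then there is a decomposition of the complete graph K_κ on κ vertices into κ pairwise edge-disjoint subgraphs, each isomorphic to T, whose edge sets partition E(K_κ). -/

import Mathlib

open Cardinal

universe u

/-- `G` is `κ`-regular: every vertex has degree (neighbourhood cardinality) exactly `κ`. -/
def SimpleGraph.CardRegular {V : Type u} (G : SimpleGraph V) (κ : Cardinal.{u}) : Prop :=
  ∀ v : V, #(G.neighborSet v) = κ

/-- `G` has no isolated vertices. -/
def SimpleGraph.NoIsolatedVerts {V : Type u} (G : SimpleGraph V) : Prop :=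
  ∀ v : V, ∃ w : V, G.Adj v w

/-- A factorization of `G`: a family of spanning subgraphs, pairwise edge-disjoint,
whose edge sets cover `E(G)`. -/
def SimpleGraph.IsFactorization {V : Type u} {ι : Type u} (G : SimpleGraph V)
    (F : ι → SimpleGraph V) : Prop :=
  (∀ i, F i ≤ G) ∧ (Pairwise fun i j => Disjoint (F i).edgeSet (F j).edgeSet) ∧
    (⋃ i, (F i).edgeSet) = G.edgeSet

/-- In the forest `F` rooted at `v₀`, `u` is a child of `w`. -/
def SimpleGraph.IsChild {V : Type u} (F : SimpleGraph V) (v₀ u w : V) : Prop :=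
  F.Adj w u ∧ F.Reachable v₀ u ∧ F.dist v₀ u = F.dist v₀ w + 1

/-- The graph with edges `v_j v_i` for `v_i ∈ C j`, `j < i`. -/
def childGraph {V I : Type u} [LT I] (v : I ≃ V) (C : I → Set V) : SimpleGraph V :=
  SimpleGraph.fromEdgeSet {e | ∃ i j : I, j < i ∧ (v i : V) ∈ C j ∧ e = s(v j, v i)}

/-- Disjoint union of `ι`-many copies of `T`. -/
def copiesGraph (ι : Type u) {W : Type u} (T : SimpleGraph W) : SimpleGraph (ι × W) where
  Adj p q := p.1 = q.1 ∧ T.Adj p.2 q.2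
  symm := ⟨by rintro p q ⟨h1, h2⟩; exact ⟨h1.symm, h2.symm⟩⟩
  loopless := ⟨by rintro p ⟨-, h⟩; exact T.loopless.irrefl _ h⟩


namespace InfRingel

variable {κ : Cardinal.{u}} {V W : Type u}

/-- Edges covered by a partial assignment. -/
def covered (r : W) (par : W → W) (P : Set (V × W × V)) : Set (Sym2 V) :=
  {e | ∃ c t x y, t ≠ r ∧ (c, t, y) ∈ P ∧ (c, par t, x) ∈ P ∧ e = s(x, y)}

/-- Invariants of the construction. -/
structure Inv (r : W) (par : W → W) (P : Set (V × W × V)) : Prop where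
  func : ∀ ⦃c t x x'⦄, (c, t, x) ∈ P → (c, t, x') ∈ P → x = x'
  inj : ∀ ⦃c t t' x⦄, (c, t, x) ∈ P → (c, t', x) ∈ P → t = t'
  edisj : ∀ ⦃c t x y c' t' x' y'⦄, t ≠ r → t' ≠ r → (c, t, y) ∈ P → (c, par t, x) ∈ P →
    (c', t', y') ∈ P → (c', par t', x') ∈ P → s(x, y) = s(x', y') → c = c' ∧ t = t'
  parA : ∀ ⦃c t x⦄, (c, t, x) ∈ P → t ≠ r → ∃ y, (c, par t, y) ∈ P

theorem covered_mono {r : W} {par : W → W} {P Q : Set (V × W × V)} (h : P ⊆ Q) :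
    covered r par P ⊆ covered r par Q := by
  rintro e ⟨c, t, x, y, ht, h1, h2, rfl⟩
  exact ⟨c, t, x, y, ht, h h1, h h2, rfl⟩

theorem small_iUnion {α ι : Type u} (hκ : ℵ₀ ≤ κ) {f : ι → Set α} (hι : #ι < κ)
    (hf : ∀ i, (f i).Finite) : #(⋃ i, f i) < κ := by
  rcases finite_or_infinite ι with h | h
  · have : (⋃ i, f i).Finite := Set.finite_iUnion hf
    exact lt_of_lt_of_le this.lt_aleph0 hκ
  · calc #(⋃ i, f i) ≤ #ι * ⨆ i, #(f i) := mk_iUnion_le f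
      _ ≤ #ι * ℵ₀ := by
          gcongr
          exact ciSup_le' fun i => ((hf i).lt_aleph0).le
      _ = #ι := by
          rw [mul_eq_max (aleph0_le_mk ι) le_rfl, max_eq_left (aleph0_le_mk ι)]
      _ < κ := hι

theorem exists_notMem {α : Type u} {S : Set α} (hV : κ ≤ #α) (hS : #S < κ) : ∃ x, x ∉ S := by
  by_contra h
  push_neg at h
  have : S = Set.univ := Set.eq_univ_of_forall h
  rw [this, mk_univ] at hS
  exact absurd (lt_of_le_of_lt hV hS) (lt_irrefl _)

theorem mk_covered_lt (hκ : ℵ₀ ≤ κ) {r : W} {par : W → W} {P : Set (V × W × V)}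
    (hP : #P < κ) : #(covered r par P) < κ := by
  have hsub : covered r par P ⊆
      (fun q : (V × W × V) × (V × W × V) => s(q.1.2.2, q.2.2.2)) '' (P ×ˢ P) := by
    rintro e ⟨c, t, x, y, ht, h1, h2, rfl⟩
    exact ⟨((c, par t, x), (c, t, y)), ⟨h2, h1⟩, rfl⟩
  calc #(covered r par P) ≤ #((fun q : (V × W × V) × (V × W × V) =>
        s(q.1.2.2, q.2.2.2)) '' (P ×ˢ P)) := mk_le_mk_of_subset hsub
    _ ≤ #(P ×ˢ P : Set _) := mk_image_le
    _ = #P * #P := mk_setProd P P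
    _ < κ := mul_lt_of_lt hκ hP hP

/-- Endpoints of covered edges. -/
def epts (r : W) (par : W → W) (P : Set (V × W × V)) : Set V :=
  {x | ∃ e ∈ covered r par P, x ∈ e}

theorem mk_epts_lt (hκ : ℵ₀ ≤ κ) {r : W} {par : W → W} {P : Set (V × W × V)}
    (hP : #P < κ) : #(epts r par P) < κ := by
  have hsub : epts r par P ⊆ ⋃ e : covered r par P, {x | x ∈ (e : Sym2 V)} := by
    rintro x ⟨e, he, hx⟩
    exact Set.mem_iUnion.2 ⟨⟨e, he⟩, hx⟩
  refine lt_of_le_of_lt (mk_le_mk_of_subset hsub) (small_iUnion hκ (mk_covered_lt hκ hP) ?_)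
  rintro ⟨e, he⟩
  induction e with
  | _ a b =>
    refine (Set.finite_singleton a |>.insert b |>.subset ?_)
    intro x hx; simp only [Sym2.mem_iff] at hx
    rcases hx with h | h <;> simp [h]

def imageC (P : Set (V × W × V)) (c : V) : Set V := {x | ∃ t, (c, t, x) ∈ P}

def usedC (P : Set (V × W × V)) : Set V := {c | ∃ t x, (c, t, x) ∈ P}

theorem mk_imageC_le {P : Set (V × W × V)} (c : V) : #(imageC P c) ≤ #P := by
  have : imageC P c ⊆ (fun p : V × W × V => p.2.2) '' P := by
    rintro x ⟨t, h⟩; exact ⟨(c, t, x), h, rfl⟩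
  exact (mk_le_mk_of_subset this).trans mk_image_le

theorem mk_usedC_le {P : Set (V × W × V)} : #(usedC P) ≤ #P := by
  have : usedC P ⊆ (fun p : V × W × V => p.1) '' P := by
    rintro c ⟨t, x, h⟩; exact ⟨(c, t, x), h, rfl⟩
  exact (mk_le_mk_of_subset this).trans mk_image_le


theorem extend_one (hκ : ℵ₀ ≤ κ) (hV : #V = κ) {r : W} {par : W → W}
    (hpar : ∀ t : W, t ≠ r → par t ≠ t)
    {P : Set (V × W × V)} (hI : Inv r par P) (hP : #P < κ) (c : V) (t : W)
    (ht : ∀ x, (c, t, x) ∉ P) (hp : t = r ∨ ∃ y, (c, par t, y) ∈ P) :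
    ∃ x, Inv r par (insert (c, t, x) P) := by
  -- choose a fresh vertex
  have hbad : #(imageC P c ∪ epts r par P : Set V) < κ := by
    refine lt_of_le_of_lt (mk_union_le _ _) ?_
    exact add_lt_of_lt hκ (lt_of_le_of_lt (mk_imageC_le c) hP) (mk_epts_lt hκ hP)
  obtain ⟨x, hx⟩ := exists_notMem (κ := κ) hV.ge hbad
  have hxim : x ∉ imageC P c := fun h => hx (Or.inl h)
  have hxep : x ∉ epts r par P := fun h => hx (Or.inr h)
  have htne : ∀ t₁ : W, t₁ ≠ r → t₁ = t → (par t₁ ≠ t₁) := fun t₁ h _ => hpar t₁ h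
  refine ⟨x, ?_, ?_, ?_, ?_⟩
  · -- func
    rintro c₁ t₁ x₁ x₁' (h1 | h1) (h2 | h2)
    · obtain ⟨e1, e2, e3⟩ : c₁ = c ∧ t₁ = t ∧ x₁ = x := by simpa using h1
      obtain ⟨-, -, e3'⟩ : c₁ = c ∧ t₁ = t ∧ x₁' = x := by simpa using h2
      exact e3.trans e3'.symm
    · obtain ⟨e1, e2, e3⟩ : c₁ = c ∧ t₁ = t ∧ x₁ = x := by simpa using h1
      rw [e1, e2] at h2; exact absurd h2 (ht _)
    · obtain ⟨e1, e2, e3⟩ : c₁ = c ∧ t₁ = t ∧ x₁' = x := by simpa using h2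
      rw [e1, e2] at h1; exact absurd h1 (ht _)
    · exact hI.func h1 h2
  · -- inj
    rintro c₁ t₁ t₁' x₁ (h1 | h1) (h2 | h2)
    · obtain ⟨-, e2, -⟩ : c₁ = c ∧ t₁ = t ∧ x₁ = x := by simpa using h1
      obtain ⟨-, e2', -⟩ : c₁ = c ∧ t₁' = t ∧ x₁ = x := by simpa using h2
      exact e2.trans e2'.symm
    · obtain ⟨e1, e2, e3⟩ : c₁ = c ∧ t₁ = t ∧ x₁ = x := by simpa using h1
      rw [e1, e3] at h2; exact absurd ⟨t₁', h2⟩ hxim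
    · obtain ⟨e1, e2, e3⟩ : c₁ = c ∧ t₁' = t ∧ x₁ = x := by simpa using h2
      rw [e1, e3] at h1; exact absurd ⟨t₁, h1⟩ hxim
    · exact hI.inj h1 h2
  · -- edisj
    have key : ∀ c₁ t₁ x₁ y₁, t₁ ≠ r → (c₁, t₁, y₁) ∈ insert (c, t, x) P →
        (c₁, par t₁, x₁) ∈ insert (c, t, x) P →
        ((c₁, t₁, y₁) ∈ P ∧ (c₁, par t₁, x₁) ∈ P) ∨
          (c₁ = c ∧ t₁ = t ∧ y₁ = x ∧ (c₁, par t₁, x₁) ∈ P) := by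
      rintro c₁ t₁ x₁ y₁ ht₁ (hc1 | hc1) (hp1 | hp1)
      · obtain ⟨e1, e2, e3⟩ : c₁ = c ∧ t₁ = t ∧ y₁ = x := by simpa using hc1
        obtain ⟨-, e2', -⟩ : c₁ = c ∧ par t₁ = t ∧ x₁ = x := by simpa using hp1
        exact absurd (e2'.trans e2.symm) (hpar t₁ ht₁)
      · obtain ⟨e1, e2, e3⟩ : c₁ = c ∧ t₁ = t ∧ y₁ = x := by simpa using hc1
        exact Or.inr ⟨e1, e2, e3, hp1⟩
      · obtain ⟨e1, e2, e3⟩ : c₁ = c ∧ par t₁ = t ∧ x₁ = x := by simpa using hp1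
        obtain ⟨y, hy⟩ := hI.parA hc1 ht₁
        rw [e1, e2] at hy
        exact absurd hy (ht _)
      · exact Or.inl ⟨hc1, hp1⟩
    rintro c₁ t₁ x₁ y₁ c₂ t₂ x₂ y₂ ht₁ ht₂ hc1 hp1 hc2 hp2 heq
    rcases key c₁ t₁ x₁ y₁ ht₁ hc1 hp1 with ⟨hc1', hp1'⟩ | ⟨q1, q2, q3, hp1'⟩ <;>
      rcases key c₂ t₂ x₂ y₂ ht₂ hc2 hp2 with ⟨hc2', hp2'⟩ | ⟨q1', q2', q3', hp2'⟩
    · exact hI.edisj ht₁ ht₂ hc1' hp1' hc2' hp2' heq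
    · exfalso
      refine hxep ⟨s(x₁, y₁), ⟨c₁, t₁, x₁, y₁, ht₁, hc1', hp1', rfl⟩, ?_⟩
      rw [← q3']; rw [heq]; exact Sym2.mem_mk_right _ _
    · exfalso
      refine hxep ⟨s(x₂, y₂), ⟨c₂, t₂, x₂, y₂, ht₂, hc2', hp2', rfl⟩, ?_⟩
      rw [← q3]; rw [← heq]; exact Sym2.mem_mk_right _ _
    · exact ⟨q1.trans q1'.symm, q2.trans q2'.symm⟩
  · -- parA
    rintro c₁ t₁ x₁ (h1 | h1) htr
    · obtain ⟨e1, e2, e3⟩ : c₁ = c ∧ t₁ = t ∧ x₁ = x := by simpa using h1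
      rcases hp with hr | ⟨y, hy⟩
      · exact absurd (e2.trans hr) htr
      · exact ⟨y, Or.inr (by rw [e1, e2]; exact hy)⟩
    · obtain ⟨y, hy⟩ := hI.parA h1 htr
      exact ⟨y, Or.inr hy⟩

theorem mk_lt_of_superset_finite (hκ : ℵ₀ ≤ κ) {α : Type u} {P Q : Set α}
    (hP : #P < κ) (hfin : (Q \ P).Finite) : #Q < κ := by
  have : Q ⊆ P ∪ (Q \ P) := fun a ha => by
    by_cases h : a ∈ P
    · exact Or.inl h
    · exact Or.inr ⟨ha, h⟩
  refine lt_of_le_of_lt ((mk_le_mk_of_subset this).trans (mk_union_le _ _)) ?_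
  exact add_lt_of_lt hκ hP (lt_of_lt_of_le hfin.lt_aleph0 hκ)


theorem insert_diff_fin {α : Type u} (a : α) (P : Set α) : (insert a P \ P).Finite := by
  refine (Set.finite_singleton a).subset ?_
  rintro b ⟨hb1 | hb1, hb2⟩
  · simp [hb1]
  · exact absurd hb1 hb2

theorem insert2_diff_fin {α : Type u} (a b : α) (P : Set α) :
    (insert a (insert b P) \ P).Finite := by
  refine ((Set.finite_singleton b).insert a).subset ?_
  rintro d ⟨hd1 | hd1, hd2⟩
  · simp [hd1]
  · rcases hd1 with h | h
    · simp [h]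
    · exact absurd h hd2

theorem extend_vertex (hκ : ℵ₀ ≤ κ) (hV : #V = κ) {r : W} {par : W → W} {dpt : W → ℕ}
    (hpar : ∀ t : W, t ≠ r → par t ≠ t)
    (hdpt : ∀ t : W, t ≠ r → dpt (par t) + 1 = dpt t) :
    ∀ n : ℕ, ∀ P : Set (V × W × V), Inv r par P → #P < κ → ∀ c : V, ∀ t : W, dpt t ≤ n →
    ∃ Q, P ⊆ Q ∧ Inv r par Q ∧ (Q \ P).Finite ∧ ∃ x, (c, t, x) ∈ Q := by
  intro n
  induction n with
  | zero =>
    intro P hI hP c t hdt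
    by_cases hx : ∃ x, (c, t, x) ∈ P
    · exact ⟨P, le_refl _, hI, by simp, hx⟩
    push_neg at hx
    by_cases htr : t = r
    · subst htr
      obtain ⟨x, hQ⟩ := extend_one hκ hV hpar hI hP c t hx (Or.inl rfl)
      exact ⟨insert (c, t, x) P, Set.subset_insert _ _, hQ, insert_diff_fin _ _,
        x, Set.mem_insert _ _⟩
    · exact absurd (Nat.le_zero.mp hdt) (by have := hdpt t htr; omega)
  | succ n ih =>
    intro P hI hP c t hdt
    by_cases hx : ∃ x, (c, t, x) ∈ P
    · exact ⟨P, le_refl _, hI, by simp, hx⟩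
    push_neg at hx
    by_cases htr : t = r
    · subst htr
      obtain ⟨x, hQ⟩ := extend_one hκ hV hpar hI hP c t hx (Or.inl rfl)
      exact ⟨insert (c, t, x) P, Set.subset_insert _ _, hQ, insert_diff_fin _ _,
        x, Set.mem_insert _ _⟩
    · have hdp : dpt (par t) ≤ n := by have := hdpt t htr; omega
      obtain ⟨Q₁, hPQ₁, hIQ₁, hfin₁, y, hy⟩ := ih P hI hP c (par t) hdp
      have hQ₁κ : #Q₁ < κ := mk_lt_of_superset_finite hκ hP hfin₁
      by_cases hx₁ : ∃ x, (c, t, x) ∈ Q₁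
      · exact ⟨Q₁, hPQ₁, hIQ₁, hfin₁, hx₁⟩
      push_neg at hx₁
      obtain ⟨x, hQ⟩ := extend_one hκ hV hpar hIQ₁ hQ₁κ c t hx₁ (Or.inr ⟨y, hy⟩)
      refine ⟨insert (c, t, x) Q₁, hPQ₁.trans (Set.subset_insert _ _), hQ, ?_, x,
        Set.mem_insert _ _⟩
      refine (hfin₁.insert (c, t, x)).subset ?_
      rintro a ⟨ha, hb⟩
      rcases ha with h | h
      · exact Set.mem_insert_iff.2 (Or.inl h)
      · exact Set.mem_insert_iff.2 (Or.inr ⟨h, hb⟩)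

theorem extend_edge (hκ : ℵ₀ ≤ κ) (hV : #V = κ) {r r' : W} {par : W → W}
    (hpar : ∀ t : W, t ≠ r → par t ≠ t) (hr' : r' ≠ r) (hpr' : par r' = r)
    {P : Set (V × W × V)} (hI : Inv r par P) (hP : #P < κ) (x y : V) (hxy : x ≠ y) :
    ∃ Q, P ⊆ Q ∧ Inv r par Q ∧ (Q \ P).Finite ∧ s(x, y) ∈ covered r par Q := by
  by_cases hcov : s(x, y) ∈ covered r par P
  · exact ⟨P, le_refl _, hI, by simp, hcov⟩
  obtain ⟨c, hc⟩ := exists_notMem (κ := κ) hV.ge (lt_of_le_of_lt mk_usedC_le hP)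
  set Q : Set (V × W × V) := insert (c, r, x) (insert (c, r', y) P) with hQdef
  have hmemA : (c, r, x) ∈ Q := Set.mem_insert _ _
  have hmemB : (c, r', y) ∈ Q := Set.mem_insert_iff.2 (Or.inr (Set.mem_insert _ _))
  have hPQ : P ⊆ Q := fun a ha => Set.mem_insert_iff.2 (Or.inr (Set.mem_insert_iff.2 (Or.inr ha)))
  have hcases : ∀ a : V × W × V, a ∈ Q → a = (c, r, x) ∨ a = (c, r', y) ∨ a ∈ P := by
    intro a ha
    rcases Set.mem_insert_iff.1 ha with h | h
    · exact Or.inl h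
    · rcases Set.mem_insert_iff.1 h with h | h
      · exact Or.inr (Or.inl h)
      · exact Or.inr (Or.inr h)
  have hfresh : ∀ t₁ x₁, (c, t₁, x₁) ∈ P → False := fun t₁ x₁ h => hc ⟨t₁, x₁, h⟩
  have key : ∀ c₁ t₁ x₁ y₁, t₁ ≠ r → (c₁, t₁, y₁) ∈ Q → (c₁, par t₁, x₁) ∈ Q →
      ((c₁, t₁, y₁) ∈ P ∧ (c₁, par t₁, x₁) ∈ P) ∨
        (c₁ = c ∧ t₁ = r' ∧ y₁ = y ∧ x₁ = x) := by
    intro c₁ t₁ x₁ y₁ ht₁ hc1 hp1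
    rcases hcases _ hc1 with h | h | h
    · obtain ⟨-, e2, -⟩ : c₁ = c ∧ t₁ = r ∧ y₁ = x := by simpa using h
      exact absurd e2 ht₁
    · obtain ⟨e1, e2, e3⟩ : c₁ = c ∧ t₁ = r' ∧ y₁ = y := by simpa using h
      rcases hcases _ hp1 with h' | h' | h'
      · obtain ⟨-, -, e3'⟩ : c₁ = c ∧ par t₁ = r ∧ x₁ = x := by simpa using h'
        exact Or.inr ⟨e1, e2, e3, e3'⟩
      · obtain ⟨-, e2', -⟩ : c₁ = c ∧ par t₁ = r' ∧ x₁ = y := by simpa using h'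
        rw [e2, hpr'] at e2'
        exact absurd e2'.symm hr'
      · rw [e1] at h'
        exact absurd h' (fun hh => hfresh _ _ hh)
    · rcases hcases _ hp1 with h' | h' | h'
      · obtain ⟨e1, -, -⟩ : c₁ = c ∧ par t₁ = r ∧ x₁ = x := by simpa using h'
        rw [e1] at h
        exact absurd h (fun hh => hfresh _ _ hh)
      · obtain ⟨e1, -, -⟩ : c₁ = c ∧ par t₁ = r' ∧ x₁ = y := by simpa using h'
        rw [e1] at h
        exact absurd h (fun hh => hfresh _ _ hh)
      · exact Or.inl ⟨h, h'⟩
  refine ⟨Q, hPQ, ⟨?_, ?_, ?_, ?_⟩, ?_, ?_⟩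
  · -- func
    intro c₁ t₁ x₁ x₁' h1 h2
    rcases hcases _ h1 with h | h | h <;> rcases hcases _ h2 with h' | h' | h'
    · obtain ⟨-, -, e3⟩ : c₁ = c ∧ t₁ = r ∧ x₁ = x := by simpa using h
      obtain ⟨-, -, e3'⟩ : c₁ = c ∧ t₁ = r ∧ x₁' = x := by simpa using h'
      exact e3.trans e3'.symm
    · obtain ⟨-, e2, -⟩ : c₁ = c ∧ t₁ = r ∧ x₁ = x := by simpa using h
      obtain ⟨-, e2', -⟩ : c₁ = c ∧ t₁ = r' ∧ x₁' = y := by simpa using h'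
      exact absurd (e2'.symm.trans e2) hr'
    · obtain ⟨e1, -, -⟩ : c₁ = c ∧ t₁ = r ∧ x₁ = x := by simpa using h
      rw [e1] at h'; exact absurd h' (fun hh => hfresh _ _ hh)
    · obtain ⟨-, e2, -⟩ : c₁ = c ∧ t₁ = r' ∧ x₁ = y := by simpa using h
      obtain ⟨-, e2', -⟩ : c₁ = c ∧ t₁ = r ∧ x₁' = x := by simpa using h'
      exact absurd (e2.symm.trans e2') hr'
    · obtain ⟨-, -, e3⟩ : c₁ = c ∧ t₁ = r' ∧ x₁ = y := by simpa using h
      obtain ⟨-, -, e3'⟩ : c₁ = c ∧ t₁ = r' ∧ x₁' = y := by simpa using h'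
      exact e3.trans e3'.symm
    · obtain ⟨e1, -, -⟩ : c₁ = c ∧ t₁ = r' ∧ x₁ = y := by simpa using h
      rw [e1] at h'; exact absurd h' (fun hh => hfresh _ _ hh)
    · obtain ⟨e1, -, -⟩ : c₁ = c ∧ t₁ = r ∧ x₁' = x := by simpa using h'
      rw [e1] at h; exact absurd h (fun hh => hfresh _ _ hh)
    · obtain ⟨e1, -, -⟩ : c₁ = c ∧ t₁ = r' ∧ x₁' = y := by simpa using h'
      rw [e1] at h; exact absurd h (fun hh => hfresh _ _ hh)
    · exact hI.func h h'
  · -- inj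
    intro c₁ t₁ t₁' x₁ h1 h2
    rcases hcases _ h1 with h | h | h <;> rcases hcases _ h2 with h' | h' | h'
    · obtain ⟨-, e2, -⟩ : c₁ = c ∧ t₁ = r ∧ x₁ = x := by simpa using h
      obtain ⟨-, e2', -⟩ : c₁ = c ∧ t₁' = r ∧ x₁ = x := by simpa using h'
      exact e2.trans e2'.symm
    · obtain ⟨-, -, e3⟩ : c₁ = c ∧ t₁ = r ∧ x₁ = x := by simpa using h
      obtain ⟨-, -, e3'⟩ : c₁ = c ∧ t₁' = r' ∧ x₁ = y := by simpa using h'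
      exact absurd (e3.symm.trans e3') hxy
    · obtain ⟨e1, -, -⟩ : c₁ = c ∧ t₁ = r ∧ x₁ = x := by simpa using h
      rw [e1] at h'; exact absurd h' (fun hh => hfresh _ _ hh)
    · obtain ⟨-, -, e3⟩ : c₁ = c ∧ t₁ = r' ∧ x₁ = y := by simpa using h
      obtain ⟨-, -, e3'⟩ : c₁ = c ∧ t₁' = r ∧ x₁ = x := by simpa using h'
      exact absurd (e3'.symm.trans e3) hxy
    · obtain ⟨-, e2, -⟩ : c₁ = c ∧ t₁ = r' ∧ x₁ = y := by simpa using h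
      obtain ⟨-, e2', -⟩ : c₁ = c ∧ t₁' = r' ∧ x₁ = y := by simpa using h'
      exact e2.trans e2'.symm
    · obtain ⟨e1, -, -⟩ : c₁ = c ∧ t₁ = r' ∧ x₁ = y := by simpa using h
      rw [e1] at h'; exact absurd h' (fun hh => hfresh _ _ hh)
    · obtain ⟨e1, -, -⟩ : c₁ = c ∧ t₁' = r ∧ x₁ = x := by simpa using h'
      rw [e1] at h; exact absurd h (fun hh => hfresh _ _ hh)
    · obtain ⟨e1, -, -⟩ : c₁ = c ∧ t₁' = r' ∧ x₁ = y := by simpa using h'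
      rw [e1] at h; exact absurd h (fun hh => hfresh _ _ hh)
    · exact hI.inj h h'
  · -- edisj
    intro c₁ t₁ x₁ y₁ c₂ t₂ x₂ y₂ ht₁ ht₂ hc1 hp1 hc2 hp2 heq
    rcases key c₁ t₁ x₁ y₁ ht₁ hc1 hp1 with ⟨hc1', hp1'⟩ | ⟨q1, q2, q3, q4⟩ <;>
      rcases key c₂ t₂ x₂ y₂ ht₂ hc2 hp2 with ⟨hc2', hp2'⟩ | ⟨q1', q2', q3', q4'⟩
    · exact hI.edisj ht₁ ht₂ hc1' hp1' hc2' hp2' heq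
    · rw [q3', q4'] at heq
      exact absurd (heq ▸ ⟨c₁, t₁, x₁, y₁, ht₁, hc1', hp1', rfl⟩) hcov
    · rw [q3, q4] at heq
      exact absurd (heq ▸ ⟨c₂, t₂, x₂, y₂, ht₂, hc2', hp2', rfl⟩) hcov
    · exact ⟨q1.trans q1'.symm, q2.trans q2'.symm⟩
  · -- parA
    intro c₁ t₁ x₁ h1 htr
    rcases hcases _ h1 with h | h | h
    · obtain ⟨-, e2, -⟩ : c₁ = c ∧ t₁ = r ∧ x₁ = x := by simpa using h
      exact absurd e2 htr
    · obtain ⟨e1, e2, -⟩ : c₁ = c ∧ t₁ = r' ∧ x₁ = y := by simpa using h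
      exact ⟨x, by rw [e1, e2, hpr']; exact hmemA⟩
    · obtain ⟨z, hz⟩ := hI.parA h htr
      exact ⟨z, hPQ hz⟩
  · -- finiteness
    exact insert2_diff_fin _ _ _
  · -- covered
    exact ⟨c, r', x, y, hr', hmemB, by rw [hpr']; exact hmemA, rfl⟩

/-- The goal of a task. -/
def goalP (r : W) (par : W → W) : ((V × W) ⊕ (V × V)) → Set (V × W × V) → Prop
  | Sum.inl ct, Q => ∃ x, (ct.1, ct.2, x) ∈ Q
  | Sum.inr xy, Q => xy.1 = xy.2 ∨ s(xy.1, xy.2) ∈ covered r par Q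

open Classical in
/-- One step of the transfinite construction. -/
noncomputable def step (κ : Cardinal.{u}) (r : W) (par : W → W)
    (prior : Set (V × W × V)) (task : (V × W) ⊕ (V × V)) : Set (V × W × V) :=
  if h : ∃ Q, prior ⊆ Q ∧ Inv r par Q ∧ (Q \ prior).Finite ∧ goalP r par task Q then
    h.choose else prior

theorem step_spec (hκ : ℵ₀ ≤ κ) (hV : #V = κ) {r r' : W} {par : W → W} {dpt : W → ℕ}
    (hpar : ∀ t : W, t ≠ r → par t ≠ t)
    (hdpt : ∀ t : W, t ≠ r → dpt (par t) + 1 = dpt t) (hr' : r' ≠ r) (hpr' : par r' = r)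
    (prior : Set (V × W × V)) (hI : Inv r par prior) (hP : #prior < κ)
    (task : (V × W) ⊕ (V × V)) :
    prior ⊆ step κ r par prior task ∧ Inv r par (step κ r par prior task) ∧
      (step κ r par prior task \ prior).Finite ∧ goalP r par task (step κ r par prior task) := by
  have hex : ∃ Q, prior ⊆ Q ∧ Inv r par Q ∧ (Q \ prior).Finite ∧ goalP r par task Q := by
    rcases task with ⟨c, t⟩ | ⟨x, y⟩
    · exact extend_vertex hκ hV hpar hdpt (dpt t) prior hI hP c t le_rfl
    · by_cases hxy : x = y
      · exact ⟨prior, le_refl _, hI, by simp, Or.inl hxy⟩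
      · obtain ⟨Q, h1, h2, h3, h4⟩ := extend_edge hκ hV hpar hr' hpr' hI hP x y hxy
        exact ⟨Q, h1, h2, h3, Or.inr h4⟩
  rw [step, dif_pos hex]
  exact hex.choose_spec

theorem construction [LinearOrder V] [WellFoundedLT V]
    (hκ : ℵ₀ ≤ κ) (hV : #V = κ) (hseg : ∀ v : V, #(Set.Iio v) < κ) (hW : #W = κ)
    (r r' : W) (par : W → W) (dpt : W → ℕ) (hr' : r' ≠ r) (hpr' : par r' = r)
    (hdpt : ∀ t, t ≠ r → dpt (par t) + 1 = dpt t) :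
    ∃ φ : V → W → V, (∀ c, Function.Injective (φ c)) ∧
      (∀ c t c' t', t ≠ r → t' ≠ r → s(φ c (par t), φ c t) = s(φ c' (par t'), φ c' t') →
        c = c' ∧ t = t') ∧
      (∀ x y : V, x ≠ y → ∃ c t, t ≠ r ∧ s(x, y) = s(φ c (par t), φ c t)) := by
  classical
  have hpar : ∀ t : W, t ≠ r → par t ≠ t := by
    intro t ht h
    have := hdpt t ht
    rw [h] at this
    omega
  -- the schedule
  have hsch : #V = #((V × W) ⊕ (V × V)) := by
    simp only [Cardinal.mk_sum, Cardinal.mk_prod, Cardinal.lift_id, hV, hW]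
    rw [mul_eq_self hκ, add_eq_self hκ]
  obtain ⟨sch⟩ : Nonempty (V ≃ ((V × W) ⊕ (V × V))) := Cardinal.eq.mp hsch
  -- the stages
  let F : ∀ s : V, (∀ s', s' < s → Set (V × W × V)) → Set (V × W × V) :=
    fun s ih => step κ r par (⋃ s' : {w : V // w < s}, ih s'.1 s'.2) (sch s)
  let stage : V → Set (V × W × V) := WellFoundedLT.fix F
  let pri : V → Set (V × W × V) := fun s => ⋃ s' : {w : V // w < s}, stage s'.1
  have hstage : ∀ s, stage s = step κ r par (pri s) (sch s) := fun s => WellFoundedLT.fix_eq F s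
  -- main induction
  have Key : ∀ s : V, Inv r par (stage s) ∧ pri s ⊆ stage s ∧ (stage s \ pri s).Finite ∧
      (stage s ⊆ ⋃ t : {w : V // w ≤ s}, (stage t.1 \ pri t.1)) ∧
      goalP r par (sch s) (stage s) := by
    intro s
    induction s using WellFoundedLT.induction with
    | ind s IH =>
    have le_stage : ∀ s₁ s₂ : V, s₂ < s → s₁ ≤ s₂ → stage s₁ ⊆ stage s₂ := by
      intro s₁ s₂ h2 h12
      rcases lt_or_eq_of_le h12 with h | h
      · exact Set.Subset.trans (fun a ha => Set.mem_iUnion.2 ⟨⟨s₁, h⟩, ha⟩) (IH s₂ h2).2.1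
      · rw [h]
    have lift4 : ∀ a b c d : V × W × V, a ∈ pri s → b ∈ pri s → c ∈ pri s → d ∈ pri s →
        ∃ m, m < s ∧ a ∈ stage m ∧ b ∈ stage m ∧ c ∈ stage m ∧ d ∈ stage m := by
      intro a b c d ha hb hc hd
      obtain ⟨s₁, ha⟩ := Set.mem_iUnion.1 ha
      obtain ⟨s₂, hb⟩ := Set.mem_iUnion.1 hb
      obtain ⟨s₃, hc⟩ := Set.mem_iUnion.1 hc
      obtain ⟨s₄, hd⟩ := Set.mem_iUnion.1 hd
      refine ⟨max (max s₁.1 s₂.1) (max s₃.1 s₄.1),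
        max_lt (max_lt s₁.2 s₂.2) (max_lt s₃.2 s₄.2), ?_, ?_, ?_, ?_⟩
      · exact le_stage _ _ (max_lt (max_lt s₁.2 s₂.2) (max_lt s₃.2 s₄.2))
          (le_max_of_le_left (le_max_left _ _)) ha
      · exact le_stage _ _ (max_lt (max_lt s₁.2 s₂.2) (max_lt s₃.2 s₄.2))
          (le_max_of_le_left (le_max_right _ _)) hb
      · exact le_stage _ _ (max_lt (max_lt s₁.2 s₂.2) (max_lt s₃.2 s₄.2))
          (le_max_of_le_right (le_max_left _ _)) hc
      · exact le_stage _ _ (max_lt (max_lt s₁.2 s₂.2) (max_lt s₃.2 s₄.2))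
          (le_max_of_le_right (le_max_right _ _)) hd
    have hpriInv : Inv r par (pri s) := by
      constructor
      · intro c t x x' h1 h2
        obtain ⟨m, hm, h1', h2', -, -⟩ := lift4 _ _ _ _ h1 h2 h1 h2
        exact (IH m hm).1.func h1' h2'
      · intro c t t' x h1 h2
        obtain ⟨m, hm, h1', h2', -, -⟩ := lift4 _ _ _ _ h1 h2 h1 h2
        exact (IH m hm).1.inj h1' h2'
      · intro c t x y c' t' x' y' ht ht' h1 h2 h3 h4 heq
        obtain ⟨m, hm, h1', h2', h3', h4'⟩ := lift4 _ _ _ _ h1 h2 h3 h4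
        exact (IH m hm).1.edisj ht ht' h1' h2' h3' h4' heq
      · intro c t x h1 ht
        obtain ⟨s₁, h1'⟩ := Set.mem_iUnion.1 h1
        obtain ⟨y, hy⟩ := (IH s₁.1 s₁.2).1.parA h1' ht
        exact ⟨y, Set.mem_iUnion.2 ⟨s₁, hy⟩⟩
    have hsubΔ : pri s ⊆ ⋃ t : {w : V // w < s}, (stage t.1 \ pri t.1) := by
      intro a ha
      obtain ⟨s₁, ha⟩ := Set.mem_iUnion.1 ha
      have := (IH s₁.1 s₁.2).2.2.2.1 ha
      obtain ⟨t, ht⟩ := Set.mem_iUnion.1 this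
      exact Set.mem_iUnion.2 ⟨⟨t.1, lt_of_le_of_lt t.2 s₁.2⟩, ht⟩
    have hpriCard : #(pri s) < κ := by
      refine lt_of_le_of_lt (mk_le_mk_of_subset hsubΔ) (small_iUnion hκ ?_ ?_)
      · exact hseg s
      · exact fun t => (IH t.1 t.2).2.2.1
    have hs := step_spec hκ hV hpar hdpt hr' hpr' (pri s) hpriInv hpriCard (sch s)
    rw [← hstage s] at hs
    refine ⟨hs.2.1, hs.1, hs.2.2.1, ?_, hs.2.2.2⟩
    intro a ha
    by_cases hap : a ∈ pri s
    · obtain ⟨t, ht⟩ := Set.mem_iUnion.1 (hsubΔ hap)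
      exact Set.mem_iUnion.2 ⟨⟨t.1, le_of_lt t.2⟩, ht⟩
    · exact Set.mem_iUnion.2 ⟨⟨s, le_refl s⟩, ha, hap⟩
  -- the limit
  set Pinf : Set (V × W × V) := ⋃ s : V, stage s with hPinf
  have monoAll : ∀ s₁ s₂ : V, s₁ ≤ s₂ → stage s₁ ⊆ stage s₂ := by
    intro s₁ s₂ h12
    rcases lt_or_eq_of_le h12 with h | h
    · exact Set.Subset.trans (fun a ha => Set.mem_iUnion.2 ⟨⟨s₁, h⟩, ha⟩) (Key s₂).2.1
    · rw [h]
  have liftAll4 : ∀ a b c d : V × W × V, a ∈ Pinf → b ∈ Pinf → c ∈ Pinf → d ∈ Pinf →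
      ∃ m, a ∈ stage m ∧ b ∈ stage m ∧ c ∈ stage m ∧ d ∈ stage m := by
    intro a b c d ha hb hc hd
    obtain ⟨s₁, ha⟩ := Set.mem_iUnion.1 ha
    obtain ⟨s₂, hb⟩ := Set.mem_iUnion.1 hb
    obtain ⟨s₃, hc⟩ := Set.mem_iUnion.1 hc
    obtain ⟨s₄, hd⟩ := Set.mem_iUnion.1 hd
    refine ⟨max (max s₁ s₂) (max s₃ s₄), ?_, ?_, ?_, ?_⟩
    · exact monoAll _ _ (le_max_of_le_left (le_max_left _ _)) ha
    · exact monoAll _ _ (le_max_of_le_left (le_max_right _ _)) hb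
    · exact monoAll _ _ (le_max_of_le_right (le_max_left _ _)) hc
    · exact monoAll _ _ (le_max_of_le_right (le_max_right _ _)) hd
  have Ifunc : ∀ ⦃c t x x'⦄, (c, t, x) ∈ Pinf → (c, t, x') ∈ Pinf → x = x' := by
    intro c t x x' h1 h2
    obtain ⟨m, h1', h2', -, -⟩ := liftAll4 _ _ _ _ h1 h2 h1 h2
    exact (Key m).1.func h1' h2'
  have Iinj : ∀ ⦃c t t' x⦄, (c, t, x) ∈ Pinf → (c, t', x) ∈ Pinf → t = t' := by
    intro c t t' x h1 h2
    obtain ⟨m, h1', h2', -, -⟩ := liftAll4 _ _ _ _ h1 h2 h1 h2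
    exact (Key m).1.inj h1' h2'
  have Iedisj : ∀ ⦃c t x y c' t' x' y'⦄, t ≠ r → t' ≠ r → (c, t, y) ∈ Pinf →
      (c, par t, x) ∈ Pinf → (c', t', y') ∈ Pinf → (c', par t', x') ∈ Pinf →
      s(x, y) = s(x', y') → c = c' ∧ t = t' := by
    intro c t x y c' t' x' y' ht ht' h1 h2 h3 h4 heq
    obtain ⟨m, h1', h2', h3', h4'⟩ := liftAll4 _ _ _ _ h1 h2 h3 h4
    exact (Key m).1.edisj ht ht' h1' h2' h3' h4' heq
  have total : ∀ c : V, ∀ t : W, ∃ x, (c, t, x) ∈ Pinf := by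
    intro c t
    have hg := (Key (sch.symm (Sum.inl (c, t)))).2.2.2.2
    rw [Equiv.apply_symm_apply] at hg
    obtain ⟨x, hx⟩ := hg
    exact ⟨x, Set.mem_iUnion.2 ⟨_, hx⟩⟩
  have coverP : ∀ x y : V, x ≠ y → s(x, y) ∈ covered r par Pinf := by
    intro x y hxy
    have hg := (Key (sch.symm (Sum.inr (x, y)))).2.2.2.2
    rw [Equiv.apply_symm_apply] at hg
    rcases hg with h | h
    · exact absurd h hxy
    · exact covered_mono (fun a ha => Set.mem_iUnion.2 ⟨_, ha⟩) h
  -- define φ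
  choose φ hφ using total
  refine ⟨φ, ?_, ?_, ?_⟩
  · intro c t t' h
    exact Iinj (hφ c t) (h ▸ hφ c t')
  · intro c t c' t' ht ht' heq
    exact Iedisj ht ht' (hφ c t) (hφ c (par t)) (hφ c' t') (hφ c' (par t')) heq
  · intro x y hxy
    obtain ⟨c, t, x₀, y₀, ht, h1, h2, heq⟩ := coverP x y hxy
    refine ⟨c, t, ht, ?_⟩
    rw [heq, Ifunc h1 (hφ c t), Ifunc h2 (hφ c (par t))]


variable {T : SimpleGraph W}

/-- A concatenation of a path with an edge to a vertex not on it is a path. -/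
theorem isPath_concat {u v w : W} {p : T.Walk u v} (hp : p.IsPath) (h : T.Adj v w)
    (hw : w ∉ p.support) : (p.concat h).IsPath := by
  rw [← SimpleGraph.Walk.isPath_reverse_iff, SimpleGraph.Walk.reverse_concat]
  rw [SimpleGraph.Walk.cons_isPath_iff]
  refine ⟨hp.reverse, ?_⟩
  rw [SimpleGraph.Walk.support_reverse, List.mem_reverse]
  exact hw

/-- Vertices on a walk from `r` are at distance at most its length. -/
theorem dist_le_length_of_mem_support {r u x : W} {p : T.Walk r u} (hx : x ∈ p.support) :
    T.dist r x ≤ p.length := by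
  classical
  calc T.dist r x ≤ (p.takeUntil x hx).length := SimpleGraph.dist_le _
    _ ≤ p.length := SimpleGraph.Walk.length_takeUntil_le p hx

/-- Parent existence: every non-root vertex has a neighbour strictly closer to the root. -/
theorem exists_parent (hc : T.Connected) (r : W) :
    ∀ t, t ≠ r → ∃ u, T.Adj u t ∧ T.dist r u + 1 = T.dist r t := by
  intro t ht
  have hd : T.dist t r ≠ 0 := by
    rw [SimpleGraph.dist_ne_zero_iff_ne_and_reachable]
    exact ⟨ht, hc t r⟩
  obtain ⟨p, hp⟩ := (hc t r).exists_walk_length_eq_dist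
  cases p with
  | nil => exact absurd rfl ht
  | cons h q =>
    rename_i u
    refine ⟨u, h.symm, ?_⟩
    have h1 : T.dist r u ≤ q.length := by
      rw [SimpleGraph.dist_comm]
      exact SimpleGraph.dist_le q
    have h2 : T.dist r t ≤ T.dist r u + 1 := by
      calc T.dist r t ≤ T.dist r u + T.dist u t := hc.dist_triangle
        _ ≤ T.dist r u + 1 := by
            have : T.dist u t = 1 := SimpleGraph.dist_eq_one_iff_adj.2 h.symm
            omega
    have h3 : q.length + 1 = T.dist t r := by
      simpa [SimpleGraph.Walk.length_cons] using hp
    rw [SimpleGraph.dist_comm] at h3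
    omega

/-- In an acyclic connected graph, adjacent vertices are at different distances from the root. -/
theorem adj_dist_ne (hc : T.Connected) (ha : T.IsAcyclic) (r : W) :
    ∀ u t, T.Adj u t → T.dist r u ≠ T.dist r t := by
  classical
  intro u t h heq
  set d := T.dist r t with hdd
  obtain ⟨pu, hpu, hlu⟩ := hc.exists_path_of_dist r u
  obtain ⟨pt, hpt, hlt⟩ := hc.exists_path_of_dist r t
  have htp : t ∉ pu.support := by
    intro hmem
    have h1 : T.dist r t ≤ (pu.takeUntil t hmem).length := SimpleGraph.dist_le _
    have h2 : (pu.takeUntil t hmem).length + (pu.dropUntil t hmem).length = pu.length := by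
      have h2' := congrArg SimpleGraph.Walk.length (pu.take_spec hmem)
      rw [SimpleGraph.Walk.length_append] at h2'
      exact h2'
    have h3 : (pu.dropUntil t hmem).length = 0 := by
      rw [heq] at hlu
      omega
    exact h.ne' (SimpleGraph.Walk.eq_of_length_eq_zero h3)
  have hq : (pu.concat h).IsPath := isPath_concat hpu h htp
  have huniq : pu.concat h = pt := Subtype.mk_eq_mk.1 (ha.path_unique ⟨pu.concat h, hq⟩ ⟨pt, hpt⟩)
  have hlen : (pu.concat h).length = pt.length := congrArg SimpleGraph.Walk.length huniq
  rw [SimpleGraph.Walk.length_concat, hlu, hlt, heq] at hlen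
  omega

/-- Uniqueness of the parent. -/
theorem parent_unique (hc : T.Connected) (ha : T.IsAcyclic) (r : W) :
    ∀ u v t, T.Adj u t → T.Adj v t → T.dist r u + 1 = T.dist r t →
      T.dist r v + 1 = T.dist r t → u = v := by
  intro u v t hu hv hdu hdv
  obtain ⟨pu, hpu, hlu⟩ := hc.exists_path_of_dist r u
  obtain ⟨pv, hpv, hlv⟩ := hc.exists_path_of_dist r v
  have htu : t ∉ pu.support := fun hmem =>
    by have := dist_le_length_of_mem_support hmem; omega
  have htv : t ∉ pv.support := fun hmem =>
    by have := dist_le_length_of_mem_support hmem; omega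
  have hqu : (pu.concat hu).IsPath := isPath_concat hpu hu htu
  have hqv : (pv.concat hv).IsPath := isPath_concat hpv hv htv
  have heq : pu.concat hu = pv.concat hv :=
    Subtype.mk_eq_mk.1 (ha.path_unique ⟨pu.concat hu, hqu⟩ ⟨pv.concat hv, hqv⟩)
  have hedge : s(u, t) ∈ (pv.concat hv).edges := by
    rw [← heq, SimpleGraph.Walk.edges_concat]
    simp
  rw [SimpleGraph.Walk.edges_concat] at hedge
  rw [List.concat_eq_append] at hedge
  rcases List.mem_append.1 hedge with hmem | hmem
  · exfalso
    have : t ∈ pv.support := SimpleGraph.Walk.snd_mem_support_of_mem_edges pv hmem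
    have := dist_le_length_of_mem_support this
    omega
  · have : s(u, t) = s(v, t) := by simpa using hmem
    rcases Sym2.eq_iff.1 this with ⟨h1, -⟩ | ⟨h1, h2⟩
    · exact h1
    · exact absurd h1 hu.ne

/-- Packaging the rooted-tree structure. -/
theorem tree_structure (T : SimpleGraph W) (htree : T.IsTree) [Nontrivial W] :
    ∃ (r r' : W) (par : W → W), r' ≠ r ∧ par r' = r ∧
      (∀ t, t ≠ r → T.dist r (par t) + 1 = T.dist r t) ∧
      (∀ t u, T.Adj t u ↔ ((t ≠ r ∧ par t = u) ∨ (u ≠ r ∧ par u = t))) := by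
  classical
  have hc : T.Connected := htree.isConnected
  have ha : T.IsAcyclic := htree.IsAcyclic
  obtain ⟨r⟩ : Nonempty W := inferInstance
  set par : W → W := fun t => if h : t = r then r else (exists_parent hc r t h).choose with hpar
  have hspec : ∀ t, t ≠ r → T.Adj (par t) t ∧ T.dist r (par t) + 1 = T.dist r t := by
    intro t ht
    have := (exists_parent hc r t ht).choose_spec
    simp only [hpar, dif_neg ht]
    exact this
  -- a neighbour of the root
  obtain ⟨w, hw⟩ := exists_ne r
  obtain ⟨p⟩ := hc r w
  have hex : ∃ v, T.Adj r v := by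
    cases p with
    | nil => exact absurd rfl hw.symm
    | cons h q => exact ⟨_, h⟩
  obtain ⟨r', hadjr'⟩ := hex
  have hr' : r' ≠ r := hadjr'.ne'
  have hdistr' : T.dist r r' = 1 := SimpleGraph.dist_eq_one_iff_adj.2 hadjr'
  have hpr' : par r' = r := by
    have h1 := hspec r' hr'
    refine parent_unique hc ha r (par r') r r' h1.1 hadjr' h1.2 ?_
    rw [hdistr', SimpleGraph.dist_self]
  refine ⟨r, r', par, hr', hpr', fun t ht => (hspec t ht).2, ?_⟩
  intro t u
  constructor
  · intro h
    have hne := adj_dist_ne hc ha r t u h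
    have h1 : T.dist r u ≤ T.dist r t + 1 := by
      calc T.dist r u ≤ T.dist r t + T.dist t u := hc.dist_triangle
        _ ≤ T.dist r t + 1 := by
            have : T.dist t u = 1 := SimpleGraph.dist_eq_one_iff_adj.2 h
            omega
    have h2 : T.dist r t ≤ T.dist r u + 1 := by
      calc T.dist r t ≤ T.dist r u + T.dist u t := hc.dist_triangle
        _ ≤ T.dist r u + 1 := by
            have : T.dist u t = 1 := SimpleGraph.dist_eq_one_iff_adj.2 h.symm
            omega
    rcases (by omega : T.dist r t = T.dist r u + 1 ∨ T.dist r u = T.dist r t + 1) with hd | hd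
    · -- u is the parent of t
      have htr : t ≠ r := by
        intro hrr
        rw [hrr, SimpleGraph.dist_self] at hd
        omega
      refine Or.inl ⟨htr, ?_⟩
      exact parent_unique hc ha r (par t) u t (hspec t htr).1 h.symm (hspec t htr).2
        (by omega)
    · have hur : u ≠ r := by
        intro hrr
        rw [hrr, SimpleGraph.dist_self] at hd
        omega
      refine Or.inr ⟨hur, ?_⟩
      exact parent_unique hc ha r (par u) t u (hspec u hur).1 h (hspec u hur).2
        (by omega)
  · rintro (⟨ht, hpt⟩ | ⟨hu, hpu⟩)
    · exact (hpt ▸ (hspec t ht).1).symm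
    · exact hpu ▸ (hspec u hu).1

end InfRingel

/-- Infinite Ringel: for every tree `T` of order `κ`, the complete graph `K_κ` decomposes
into `κ` pairwise edge-disjoint copies of `T`. -/
theorem stmt_7 (κ : Cardinal.{u}) (hκ : ℵ₀ ≤ κ) {W : Type u} (T : SimpleGraph W)
    (htree : T.IsTree) (hW : #W = κ) :
    ∃ F : κ.ord.ToType → (⊤ : SimpleGraph κ.ord.ToType).Subgraph,
      (Pairwise fun i j => Disjoint (F i).edgeSet (F j).edgeSet) ∧
      (∀ i, Nonempty ((F i).coe ≃g T)) ∧
      (⋃ i, (F i).edgeSet) = (⊤ : SimpleGraph κ.ord.ToType).edgeSet := by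
  classical
  set V := κ.ord.ToType with hVdef
  have hV : #V = κ := Cardinal.mk_ord_toType κ
  have hseg : ∀ v : V, #(Set.Iio v) < κ := fun v => Cardinal.mk_Iio_ord_toType v
  have hnt : Nontrivial W := by
    rw [← Cardinal.one_lt_iff_nontrivial, hW]
    exact lt_of_lt_of_le Cardinal.one_lt_aleph0 hκ
  obtain ⟨r, r', par, hr', hpr', hdist, hadj⟩ := InfRingel.tree_structure T htree
  have hparne : ∀ t : W, t ≠ r → par t ≠ t := by
    intro t ht h
    have := hdist t ht
    rw [h] at this
    omega
  obtain ⟨φ, hinj, hcross, hcover⟩ := InfRingel.construction (V := V) hκ hV hseg hW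
    r r' par (T.dist r) hr' hpr' hdist
  -- build the subgraphs
  refine ⟨fun c => {
    verts := Set.range (φ c)
    Adj := fun a b => ∃ t, t ≠ r ∧
      ((a = φ c (par t) ∧ b = φ c t) ∨ (b = φ c (par t) ∧ a = φ c t))
    adj_sub := ?_
    edge_vert := ?_
    symm := ?_ }, ?_, ?_, ?_⟩
  · rintro a b ⟨t, ht, ⟨rfl, rfl⟩ | ⟨rfl, rfl⟩⟩
    · exact fun h => hparne t ht (hinj c h)
    · exact fun h => hparne t ht (hinj c h.symm)
  · rintro a b ⟨t, ht, ⟨rfl, -⟩ | ⟨-, rfl⟩⟩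
    · exact ⟨par t, rfl⟩
    · exact ⟨t, rfl⟩
  · refine ⟨?_⟩
    rintro a b ⟨t, ht, ⟨h1, h2⟩ | ⟨h1, h2⟩⟩
    · exact ⟨t, ht, Or.inr ⟨h1, h2⟩⟩
    · exact ⟨t, ht, Or.inl ⟨h1, h2⟩⟩
  · -- pairwise disjoint
    have hAdj : ∀ (c a b : V), (∃ t, t ≠ r ∧
        ((a = φ c (par t) ∧ b = φ c t) ∨ (b = φ c (par t) ∧ a = φ c t))) →
        ∃ t, t ≠ r ∧ s(a, b) = s(φ c (par t), φ c t) := by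
      rintro c a b ⟨t, ht, ⟨rfl, rfl⟩ | ⟨rfl, rfl⟩⟩
      · exact ⟨t, ht, rfl⟩
      · exact ⟨t, ht, Sym2.eq_swap⟩
    intro i j hij
    rw [Set.disjoint_left]
    intro e hei hej
    induction e with
    | _ a b =>
      rw [SimpleGraph.Subgraph.mem_edgeSet] at hei hej
      obtain ⟨t, ht, he⟩ := hAdj i a b hei
      obtain ⟨t', ht', he'⟩ := hAdj j a b hej
      exact hij (hcross i t j t' ht ht' (he.symm.trans he')).1
  · -- isomorphism
    intro c
    refine ⟨⟨(Equiv.ofInjective (φ c) (hinj c)).symm, ?_⟩⟩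
    rintro ⟨a, t₁, rfl⟩ ⟨b, t₂, rfl⟩
    rw [Equiv.ofInjective_symm_apply, Equiv.ofInjective_symm_apply]
    rw [SimpleGraph.Subgraph.coe_adj]
    constructor
    · intro h
      rcases (hadj t₁ t₂).1 h with ⟨ht, hp⟩ | ⟨ht, hp⟩
      · exact ⟨t₁, ht, Or.inr ⟨by rw [hp], rfl⟩⟩
      · exact ⟨t₂, ht, Or.inl ⟨by rw [hp], rfl⟩⟩
    · rintro ⟨t, ht, ⟨h1, h2⟩ | ⟨h1, h2⟩⟩
      · have e1 : t₁ = par t := hinj c h1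
        have e2 : t₂ = t := hinj c h2
        exact (hadj t₁ t₂).2 (Or.inr ⟨e2 ▸ ht, by rw [e1, e2]⟩)
      · have e1 : t₂ = par t := hinj c h1
        have e2 : t₁ = t := hinj c h2
        exact (hadj t₁ t₂).2 (Or.inl ⟨e2 ▸ ht, by rw [e1, e2]⟩)
  · -- union of edge sets
    ext e
    induction e with
    | _ a b =>
      simp only [Set.mem_iUnion, SimpleGraph.Subgraph.mem_edgeSet, SimpleGraph.mem_edgeSet,
        SimpleGraph.top_adj]
      constructor
      · rintro ⟨c, t, ht, ⟨rfl, rfl⟩ | ⟨rfl, rfl⟩⟩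
        · exact fun h => hparne t ht (hinj c h)
        · exact fun h => hparne t ht (hinj c h.symm)
      · intro hab
        obtain ⟨c, t, ht, he⟩ := hcover a b hab
        rcases Sym2.eq_iff.1 he with ⟨h1, h2⟩ | ⟨h1, h2⟩
        · exact ⟨c, t, ht, Or.inl ⟨h1, h2⟩⟩
        · exact ⟨c, t, ht, Or.inr ⟨h2, h1⟩⟩
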